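/- For every integer k ≥ 1 and every unit vector ψ ∈ ℂⁿ, the expectation value ⟨(|0⟩⊗ψ), C^{2k} (|0⟩⊗ψ)⟩ equals Σ_{l=1}^{n} |α_l|² cos(2k θ_l), which in turn equals Σ_{l=1}^{n} |α_l|² T_{4k}(λ_l). (This is the paper's Theorem 1: the k-th order OTOC is the 2k-th Fourier moment, equivalently the 4k-th Chebyshev moment, of the singular-value phase distribution of the truncated propagator A.) -/

import Mathlib

open Matrix Finset

namespace OTOCaux

/-- coefficients of `C^m e_l` in the basis `(e_l, f_l)`. -/
noncomputable def PQ : ℕ → ℝ → ℝ × ℝ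
  | 0, _ => (1, 0)
  | m+1, c => (-(PQ m c).1 - 2*c*(PQ m c).2,
               2*c*(PQ m c).1 + (4*c^2 - 1)*(PQ m c).2)

lemma PQ_trig (t : ℝ) (m : ℕ) :
    (PQ m (Real.cos (t/2))).1 + Real.cos (t/2) * (PQ m (Real.cos (t/2))).2
      = Real.cos (m*t)
    ∧ Real.sin (t/2) * (PQ m (Real.cos (t/2))).2 = Real.sin (m*t) := by
  have hc : Real.cos t = 2 * Real.cos (t/2)^2 - 1 := by
    have := Real.cos_two_mul (t/2)
    rw [show 2*(t/2) = t by ring] at this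
    linarith
  have hs : Real.sin t = 2 * Real.sin (t/2) * Real.cos (t/2) := by
    have := Real.sin_two_mul (t/2)
    rw [show 2*(t/2) = t by ring] at this
    linarith
  have hp : Real.sin (t/2)^2 + Real.cos (t/2)^2 = 1 := Real.sin_sq_add_cos_sq _
  induction m with
  | zero => simp [PQ]
  | succ m ih =>
    obtain ⟨h1, h2⟩ := ih
    have harg : ((m+1 : ℕ) : ℝ) * t = (m:ℝ)*t + t := by push_cast; ring
    constructor
    · show -(PQ m _).1 - 2*_*(PQ m _).2 + Real.cos (t/2) * (2*Real.cos (t/2)*(PQ m _).1 + (4*Real.cos (t/2)^2 - 1)*(PQ m _).2) = _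
      rw [harg, Real.cos_add, hc, hs]
      linear_combination (2*Real.cos (t/2)^2-1)*h1 - 2*Real.sin (t/2)*Real.cos (t/2)*h2 + 2*Real.cos (t/2)*(PQ m (Real.cos (t/2))).2*hp
    · show Real.sin (t/2) * (2*Real.cos (t/2)*(PQ m _).1 + (4*Real.cos (t/2)^2 - 1)*(PQ m _).2) = _
      rw [harg, Real.sin_add, hc, hs]
      linear_combination 2*Real.sin (t/2)*Real.cos (t/2)*h1 + (2*Real.cos (t/2)^2-1)*h2

variable {n : ℕ}

/-- embed `ℂⁿ` as the `|0⟩` sector. -/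
def up (x : Fin n → ℂ) : Fin 2 × Fin n → ℂ := fun p => if p.1 = 0 then x p.2 else 0

@[simp] lemma up_zero_apply (x : Fin n → ℂ) (a : Fin n) : up x (0, a) = x a := rfl

lemma dot_up (z : Fin 2 × Fin n → ℂ) (y : Fin n → ℂ) :
    star z ⬝ᵥ up y = star (fun a => z (0, a)) ⬝ᵥ y := by
  simp [dotProduct, Fintype.sum_prod_type, up, Fin.sum_univ_two]

lemma mulVec_up_zero (M : Matrix (Fin 2 × Fin n) (Fin 2 × Fin n) ℂ) (x : Fin n → ℂ) (a : Fin n) :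
    (M *ᵥ up x) (0, a) = ∑ b, M (0,a) (0,b) * x b := by
  simp [Matrix.mulVec, dotProduct, Fintype.sum_prod_type, up, Fin.sum_univ_two]

lemma mulVec_sum {ι : Type*} (M : Matrix (Fin 2 × Fin n) (Fin 2 × Fin n) ℂ) (s : Finset ι)
    (g : ι → (Fin 2 × Fin n → ℂ)) :
    M *ᵥ (∑ i ∈ s, g i) = ∑ i ∈ s, M *ᵥ g i := by
  funext j
  simp only [Matrix.mulVec, dotProduct, Finset.sum_apply, Finset.mul_sum]
  rw [Finset.sum_comm]

lemma dot_sum {ι : Type*} (u : Fin 2 × Fin n → ℂ) (s : Finset ι)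
    (g : ι → (Fin 2 × Fin n → ℂ)) :
    u ⬝ᵥ (∑ i ∈ s, g i) = ∑ i ∈ s, u ⬝ᵥ g i := by
  simp only [dotProduct, Finset.sum_apply, Finset.mul_sum]
  rw [Finset.sum_comm]

lemma up_sum {ι : Type*} (s : Finset ι) (g : ι → (Fin n → ℂ)) :
    up (∑ i ∈ s, g i) = ∑ i ∈ s, up (g i) := by
  funext p
  by_cases h : p.1 = 0 <;> simp [up, h, Finset.sum_apply]

lemma up_smul (c : ℂ) (x : Fin n → ℂ) : up (c • x) = c • up x := by
  funext p
  by_cases h : p.1 = 0 <;> simp [up, h]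

end OTOCaux

open OTOCaux

/-- **OTOC as a Chebyshev polynomial transform** (Theorem 1).
For every integer `k ≥ 1` and every unit vector `ψ ∈ ℂⁿ`, the expectation value
`⟨(|0⟩⊗ψ), C^{2k} (|0⟩⊗ψ)⟩` equals `Σ_l |α_l|² cos(2k θ_l) = Σ_l |α_l|² T_{4k}(λ_l)`. -/
theorem otoc_chebyshev_transform
    (n : ℕ) (hn : 1 ≤ n)
    (Ut : Matrix (Fin 2 × Fin n) (Fin 2 × Fin n) ℂ)
    (hUt : Ut ∈ Matrix.unitaryGroup (Fin 2 × Fin n) ℂ)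
    (A : Matrix (Fin n) (Fin n) ℂ)
    (hA : ∀ a b : Fin n, A a b = Ut (0, a) (0, b))
    (ZI : Matrix (Fin 2 × Fin n) (Fin 2 × Fin n) ℂ)
    (hZI : ∀ p q : Fin 2 × Fin n,
      ZI p q = if p = q then (if p.1 = 0 then 1 else -1) else 0)
    (C : Matrix (Fin 2 × Fin n) (Fin 2 × Fin n) ℂ)
    (hC : C = Utᴴ * ZI * Ut * ZI)
    -- singular value decomposition of `A`
    (ψb φb : Fin n → (Fin n → ℂ))
    (hψb : ∀ l l' : Fin n, star (ψb l) ⬝ᵥ ψb l' = if l = l' then 1 else 0)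
    (hφb : ∀ l l' : Fin n, star (φb l) ⬝ᵥ φb l' = if l = l' then 1 else 0)
    (lam θ : Fin n → ℝ)
    (hAφ : ∀ l : Fin n, A *ᵥ φb l = (lam l : ℂ) • ψb l)
    (hAψ : ∀ l : Fin n, Aᴴ *ᵥ ψb l = (lam l : ℂ) • φb l)
    (hlam : ∀ l : Fin n, lam l ∈ Set.Icc (0 : ℝ) 1)
    (hθ : ∀ l : Fin n, θ l ∈ Set.Icc (0 : ℝ) Real.pi)
    (hlamθ : ∀ l : Fin n, lam l = Real.cos (θ l / 2))
    -- reference unit vector `ψ` and its overlaps `α_l`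
    (ψ : Fin n → ℂ) (hψ : star ψ ⬝ᵥ ψ = 1)
    (v : Fin 2 × Fin n → ℂ)
    (hv : ∀ p : Fin 2 × Fin n, v p = if p.1 = 0 then ψ p.2 else 0)
    (α : Fin n → ℂ) (hα : ∀ l : Fin n, α l = star (φb l) ⬝ᵥ ψ)
    (k : ℕ) (hk : 1 ≤ k) :
    star v ⬝ᵥ ((C ^ (2 * k)) *ᵥ v)
      = ((∑ l : Fin n, ‖α l‖ ^ 2 * Real.cos (2 * k * θ l) : ℝ) : ℂ)
    ∧ star v ⬝ᵥ ((C ^ (2 * k)) *ᵥ v)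
      = ((∑ l : Fin n, ‖α l‖ ^ 2 *
          (Polynomial.Chebyshev.T ℝ (4 * k)).eval (lam l) : ℝ) : ℂ) := by
  classical
  -- basic unitary facts
  have hU2 : Ut * Utᴴ = 1 := (Matrix.mem_unitaryGroup_iff).mp hUt
  have hU1 : Utᴴ * Ut = 1 := (Matrix.mem_unitaryGroup_iff').mp hUt
  have hUtU : ∀ z : Fin 2 × Fin n → ℂ, Utᴴ *ᵥ (Ut *ᵥ z) = z := by
    intro z; rw [Matrix.mulVec_mulVec, hU1, Matrix.one_mulVec]
  have hUUt : ∀ z : Fin 2 × Fin n → ℂ, Ut *ᵥ (Utᴴ *ᵥ z) = z := by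
    intro z; rw [Matrix.mulVec_mulVec, hU2, Matrix.one_mulVec]
  have hadj : ∀ x y : Fin 2 × Fin n → ℂ,
      star x ⬝ᵥ (Utᴴ *ᵥ y) = star (Ut *ᵥ x) ⬝ᵥ y := by
    intro x y
    rw [Matrix.star_mulVec, Matrix.dotProduct_mulVec]
  -- Z ⊗ I action
  have hZIv : ∀ z : Fin 2 × Fin n → ℂ, ZI *ᵥ z
      = fun p => (if p.1 = 0 then 1 else -1) * z p := by
    intro z; funext p
    simp [Matrix.mulVec, dotProduct, hZI, ite_mul]
  have hZI_up : ∀ x : Fin n → ℂ, ZI *ᵥ up x = up x := by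
    intro x; rw [hZIv]; funext p
    by_cases h : p.1 = 0 <;> simp [up, h]
  have hZI_split : ∀ z : Fin 2 × Fin n → ℂ,
      ZI *ᵥ z = (2:ℂ) • up (fun a => z (0,a)) - z := by
    intro z; rw [hZIv]; funext p
    by_cases h : p.1 = 0
    · rcases p with ⟨i, a⟩
      simp only at h
      subst h
      simp [up]
      try ring
    · simp [up, h]
      try ring
  -- top blocks
  have hTopU : ∀ (x : Fin n → ℂ), (fun a => (Ut *ᵥ up x) (0, a)) = A *ᵥ x := by
    intro x; funext a; rw [mulVec_up_zero]; simp [Matrix.mulVec, dotProduct, hA]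
  have hTopUH : ∀ (x : Fin n → ℂ), (fun a => (Utᴴ *ᵥ up x) (0, a)) = Aᴴ *ᵥ x := by
    intro x; funext a; rw [mulVec_up_zero]
    simp [Matrix.mulVec, dotProduct, Matrix.conjTranspose_apply, hA]
  -- action of C
  have hCv : ∀ z : Fin 2 × Fin n → ℂ,
      C *ᵥ z = Utᴴ *ᵥ (ZI *ᵥ (Ut *ᵥ (ZI *ᵥ z))) := by
    intro z; simp [hC, Matrix.mulVec_mulVec, Matrix.mul_assoc]
  have hCe : ∀ l, C *ᵥ up (φb l)
      = ((2*lam l : ℝ) : ℂ) • (Utᴴ *ᵥ up (ψb l)) - up (φb l) := by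
    intro l
    rw [hCv, hZI_up (φb l), hZI_split (Ut *ᵥ up (φb l)), hTopU, hAφ, up_smul]
    rw [Matrix.mulVec_sub, Matrix.mulVec_smul, Matrix.mulVec_smul, hUtU]
    funext p
    simp [smul_smul]
    push_cast
    ring
  have hCf : ∀ l, C *ᵥ (Utᴴ *ᵥ up (ψb l))
      = ((4*(lam l)^2 - 1 : ℝ) : ℂ) • (Utᴴ *ᵥ up (ψb l))
        - ((2*lam l : ℝ) : ℂ) • up (φb l) := by
    intro l
    have s1 : ZI *ᵥ (Utᴴ *ᵥ up (ψb l))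
        = (2:ℂ) • ((lam l : ℂ) • up (φb l)) - Utᴴ *ᵥ up (ψb l) := by
      rw [hZI_split, hTopUH, hAψ, up_smul]
    have s2 : Ut *ᵥ ((2:ℂ) • ((lam l : ℂ) • up (φb l)) - Utᴴ *ᵥ up (ψb l))
        = (2:ℂ) • ((lam l : ℂ) • (Ut *ᵥ up (φb l))) - up (ψb l) := by
      rw [Matrix.mulVec_sub, Matrix.mulVec_smul, Matrix.mulVec_smul, hUUt]
    have s3 : ZI *ᵥ ((2:ℂ) • ((lam l : ℂ) • (Ut *ᵥ up (φb l))) - up (ψb l))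
        = (2:ℂ) • ((lam l : ℂ) •
            ((2:ℂ) • ((lam l : ℂ) • up (ψb l)) - Ut *ᵥ up (φb l))) - up (ψb l) := by
      rw [Matrix.mulVec_sub, Matrix.mulVec_smul, Matrix.mulVec_smul, hZI_up,
          hZI_split (Ut *ᵥ up (φb l)), hTopU, hAφ, up_smul]
    rw [hCv, s1, s2, s3]
    rw [Matrix.mulVec_sub, Matrix.mulVec_smul, Matrix.mulVec_smul, Matrix.mulVec_sub,
        Matrix.mulVec_smul, Matrix.mulVec_smul, hUtU]
    funext p
    simp [smul_smul]
    push_cast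
    ring
  -- inner products
  have hee : ∀ l l', star (up (φb l)) ⬝ᵥ up (φb l') = if l = l' then 1 else 0 := by
    intro l l'
    rw [dot_up]
    simpa using hφb l l'
  have hef : ∀ l l', star (up (φb l)) ⬝ᵥ (Utᴴ *ᵥ up (ψb l'))
      = if l = l' then ((lam l' : ℝ) : ℂ) else 0 := by
    intro l l'
    rw [hadj, dot_up, hTopU, hAφ]
    have : star ((lam l : ℂ) • ψb l) ⬝ᵥ ψb l'
        = ((lam l : ℝ) : ℂ) * (star (ψb l) ⬝ᵥ ψb l') := by
      simp [star_smul, smul_dotProduct, smul_eq_mul, Complex.star_def,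
        Complex.conj_ofReal]
    rw [this, hψb]
    by_cases h : l = l' <;> simp [h]
  
  -- completeness of the orthonormal family φb
  have hcomp : ∀ a b : Fin n, (∑ l, φb l a * star (φb l b)) = if a = b then 1 else 0 := by
    intro a b
    set Φ : Matrix (Fin n) (Fin n) ℂ := Matrix.of fun a l => φb l a with hΦdef
    have hΦ : Φᴴ * Φ = 1 := by
      ext l l'
      have h := hφb l l'
      simpa [Matrix.mul_apply, Matrix.conjTranspose_apply, Matrix.one_apply, dotProduct,
        hΦdef] using h
    have hΦ2 : Φ * Φᴴ = 1 := mul_eq_one_comm.mp hΦ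
    have h := congrFun (congrFun hΦ2 a) b
    simpa [Matrix.mul_apply, Matrix.conjTranspose_apply, Matrix.one_apply, hΦdef] using h
  have hψ_sum : ψ = ∑ l, α l • φb l := by
    funext a
    have h1 : (∑ l, α l • φb l) a = ∑ l, (∑ b, star (φb l b) * ψ b) * φb l a := by
      simp [hα, dotProduct, Finset.sum_apply]
    rw [h1]
    have h2 : ∀ l ∈ Finset.univ, (∑ b, star (φb l b) * ψ b) * φb l a
        = ∑ b, φb l a * star (φb l b) * ψ b := by
      intro l _; rw [Finset.sum_mul]; apply Finset.sum_congr rfl; intros; ring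
    rw [Finset.sum_congr rfl h2, Finset.sum_comm]
    have h3 : ∀ b ∈ Finset.univ, (∑ l, φb l a * star (φb l b) * ψ b)
        = (if a = b then 1 else 0) * ψ b := by
      intro b _; rw [← Finset.sum_mul, hcomp]
    rw [Finset.sum_congr rfl h3]
    simp
  have hvψ : v = up ψ := by
    funext p; rw [hv]; rfl
  have hv_sum : v = ∑ l, α l • up (φb l) := by
    rw [hvψ, hψ_sum, up_sum]
    exact Finset.sum_congr rfl fun l _ => up_smul _ _
  -- the key induction
  have key : ∀ m : ℕ, (C ^ m) *ᵥ v
      = ∑ l, α l • ((((PQ m (lam l)).1 : ℝ) : ℂ) • up (φb l)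
          + (((PQ m (lam l)).2 : ℝ) : ℂ) • (Utᴴ *ᵥ up (ψb l))) := by
    intro m
    induction m with
    | zero =>
      rw [pow_zero, Matrix.one_mulVec, hv_sum]
      apply Finset.sum_congr rfl
      intro l _
      simp [PQ]
    | succ m ih =>
      rw [pow_succ', ← Matrix.mulVec_mulVec, ih, OTOCaux.mulVec_sum]
      apply Finset.sum_congr rfl
      intro l _
      rw [Matrix.mulVec_smul, Matrix.mulVec_add, Matrix.mulVec_smul, Matrix.mulVec_smul,
          hCe l, hCf l]
      funext p
      simp only [PQ, Pi.smul_apply, Pi.add_apply, Pi.sub_apply, smul_eq_mul]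
      push_cast
      ring
  -- dot products with v
  have sum_dot : ∀ (g : Fin n → (Fin 2 × Fin n → ℂ)) (y : Fin 2 × Fin n → ℂ),
      star (∑ l, g l) ⬝ᵥ y = ∑ l, star (g l) ⬝ᵥ y := by
    intro g y
    simp only [dotProduct, Pi.star_apply, Finset.sum_apply, star_sum, Finset.sum_mul]
    rw [Finset.sum_comm]
  have hve : ∀ l, star v ⬝ᵥ up (φb l) = star (α l) := by
    intro l
    rw [hv_sum, sum_dot]
    simp only [star_smul, smul_dotProduct, smul_eq_mul, hee]
    simp
  have hvf : ∀ l, star v ⬝ᵥ (Utᴴ *ᵥ up (ψb l)) = star (α l) * ((lam l : ℝ) : ℂ) := by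
    intro l
    rw [hv_sum, sum_dot]
    simp only [star_smul, smul_dotProduct, smul_eq_mul, hef]
    simp
  have hdot : star v ⬝ᵥ ((C ^ (2*k)) *ᵥ v)
      = ∑ l, (star (α l) * α l) *
          ((((PQ (2*k) (lam l)).1 : ℝ) : ℂ)
            + ((lam l : ℝ) : ℂ) * (((PQ (2*k) (lam l)).2 : ℝ) : ℂ)) := by
    rw [key (2*k), dot_sum]
    apply Finset.sum_congr rfl
    intro l _
    rw [dotProduct_smul, dotProduct_add, dotProduct_smul,
        dotProduct_smul, hve l, hvf l]
    simp only [smul_eq_mul]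
    ring
  have hnorm : ∀ l, star (α l) * α l = ((‖α l‖^2 : ℝ) : ℂ) := by
    intro l
    rw [Complex.star_def, ← Complex.normSq_eq_conj_mul_self]
    rw [Complex.normSq_eq_norm_sq]
  have hfirst : star v ⬝ᵥ ((C ^ (2 * k)) *ᵥ v)
      = ((∑ l : Fin n, ‖α l‖ ^ 2 * Real.cos (2 * k * θ l) : ℝ) : ℂ) := by
    rw [hdot]
    rw [Complex.ofReal_sum]
    apply Finset.sum_congr rfl
    intro l _
    rw [hnorm l, hlamθ l]
    have htrig := (PQ_trig (θ l) (2*k)).1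
    have harg : ((2*k : ℕ) : ℝ) * θ l = 2 * k * θ l := by push_cast; ring
    rw [harg] at htrig
    rw [← htrig]
    push_cast
    ring
  refine ⟨hfirst, ?_⟩
  rw [hfirst]
  congr 1
  apply Finset.sum_congr rfl
  intro l _
  rw [hlamθ l, Polynomial.Chebyshev.T_real_cos]
  have harg : ((4*(k:ℤ) : ℤ) : ℝ) * (θ l / 2) = 2 * k * θ l := by push_cast; ring
  rw [harg]
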